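/- Let G be a locally compact Hausdorff topological group, let H be a closed subgroup of G, and let K be a compact subgroup of G such that K' := H ∩ K has infinite index in K. Let q : G → G/H be the canonical projection onto the quotient space G/H of left cosets of H, endowed with the quotient topology, and let μ be a Borel measure on G/H that is finite on compact sets, invariant under the left translation action of K on G/H, and satisfies μ(q(K)) ≠ 0. Then the index of K' in K is uncountable (the set of left cosets of K' in K is an uncountable set); in particular, the singleton {q(1)} = {eH} ⊆ G/H satisfies μ({eH}) = 0. -/

import Mathlib

open MeasureTheory

/-- Lemma 3.5 of the paper (`lem::compact_open_quotient`): if `K' = H ∩ K` has infinite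
index in the compact subgroup `K` and `μ` is a `K`-invariant Borel measure on `G/H`,
finite on compacts, with `μ(q(K)) ≠ 0`, then the index of `K'` in `K` is uncountable
and `μ({eH}) = 0`. -/
theorem stmt_3 {G : Type*} [Group G] [TopologicalSpace G] [IsTopologicalGroup G]
    [LocallyCompactSpace G] [T2Space G]
    (H : Subgroup G) (hHclosed : IsClosed (H : Set G))
    (K : Subgroup G) (hKcompact : IsCompact (K : Set G))
    (hinf : Infinite (↥K ⧸ (H ⊓ K).subgroupOf K))
    [MeasurableSpace (G ⧸ H)] [BorelSpace (G ⧸ H)]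
    (μ : Measure (G ⧸ H)) [IsFiniteMeasureOnCompacts μ]
    (hμinv : ∀ k : K, Measure.map (fun x : G ⧸ H => (k : G) • x) μ = μ)
    (hμK : μ ((QuotientGroup.mk : G → G ⧸ H) '' (K : Set G)) ≠ 0) :
    ¬ Countable (↥K ⧸ (H ⊓ K).subgroupOf K) ∧
      μ {((1 : G) : G ⧸ H)} = 0 := by
  -- singletons are measurable
  have hsing : ∀ x : G ⧸ H, MeasurableSet ({x} : Set (G ⧸ H)) := by
    intro x
    obtain ⟨g, rfl⟩ := QuotientGroup.mk_surjective x
    refine (IsClosed.measurableSet ?_)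
    suffices h : IsClosed ((QuotientGroup.mk : G → G ⧸ H) ⁻¹' {((g : G) : G ⧸ H)}) by
      exact (isQuotientMap_quotient_mk').isClosed_preimage.mp h
    have : ((QuotientGroup.mk : G → G ⧸ H) ⁻¹' {((g : G) : G ⧸ H)} : Set G)
        = (fun y => g⁻¹ * y) ⁻¹' (H : Set G) := by
      ext y
      simp only [Set.mem_preimage, Set.mem_singleton_iff, SetLike.mem_coe]
      constructor
      · intro h
        have := QuotientGroup.eq.mp h.symm
        exact this
      · intro h
        exact (QuotientGroup.eq.mpr h).symm
    rw [this]
    exact hHclosed.preimage (continuous_mul_left g⁻¹)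
  -- translation invariance on points of q(K)
  have htrans : ∀ k : K, μ {(((k : G)) : G ⧸ H)} = μ {((1 : G) : G ⧸ H)} := by
    intro k
    have hmeas : Measurable (fun x : G ⧸ H => (k : G) • x) :=
      (continuous_const_smul ((k : G))).measurable
    conv_lhs => rw [← hμinv k]
    rw [Measure.map_apply hmeas (hsing _)]
    congr 1
    ext x
    simp only [Set.mem_preimage, Set.mem_singleton_iff]
    constructor
    · intro h
      have h1 : (k : G) • x = (k : G) • (((1 : G)) : G ⧸ H) := by
        rw [h, MulAction.Quotient.smul_mk]; simp
      exact smul_left_cancel _ h1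
    · rintro rfl
      rw [MulAction.Quotient.smul_mk]; simp
  -- q(K) is compact, hence of finite measure
  have hcomp : IsCompact ((QuotientGroup.mk : G → G ⧸ H) '' (K : Set G)) :=
    hKcompact.image continuous_quotient_mk'
  have hfin : μ ((QuotientGroup.mk : G → G ⧸ H) '' (K : Set G)) < ⊤ :=
    hcomp.measure_lt_top
  -- injectivity of cosets into G/H
  have hinj : ∀ a b : K, (((a : G)) : G ⧸ H) = ((b : G) : G ⧸ H) →
      (a : ↥K ⧸ (H ⊓ K).subgroupOf K) = (b : ↥K ⧸ (H ⊓ K).subgroupOf K) := by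
    intro a b hab
    refine QuotientGroup.eq.mpr ?_
    have : (a : G)⁻¹ * (b : G) ∈ H := QuotientGroup.eq.mp hab
    simp only [Subgroup.mem_subgroupOf, Subgroup.mem_inf]
    exact ⟨this, (a⁻¹ * b).2⟩
  -- μ({eH}) = 0
  have hzero : μ {((1 : G) : G ⧸ H)} = 0 := by
    by_contra hc
    set e := Infinite.natEmbedding (↥K ⧸ (H ⊓ K).subgroupOf K)
    set k : ℕ → ↥K := fun n => (e n).out
    have hkrep : ∀ n, ((k n : ↥K) : ↥K ⧸ (H ⊓ K).subgroupOf K) = e n := fun n =>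
      QuotientGroup.out_eq' (e n)
    have hdisj : Pairwise (Function.onFun Disjoint
        (fun n => ({((k n : G) : G ⧸ H)} : Set (G ⧸ H)))) := by
      intro m n hmn
      simp only [Function.onFun, Set.disjoint_singleton]
      intro h
      exact hmn (e.injective (by rw [← hkrep m, ← hkrep n, hinj _ _ h]))
    have hU : μ (⋃ n, ({((k n : G) : G ⧸ H)} : Set (G ⧸ H)))
        = ∑' n : ℕ, μ {((k n : G) : G ⧸ H)} :=
      measure_iUnion hdisj fun n => hsing _
    have hsub : (⋃ n, ({((k n : G) : G ⧸ H)} : Set (G ⧸ H)))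
        ⊆ (QuotientGroup.mk : G → G ⧸ H) '' (K : Set G) := by
      refine Set.iUnion_subset fun n => ?_
      rintro x rfl
      exact ⟨(k n : G), (k n).2, rfl⟩
    have : (⊤ : ENNReal) ≤ μ ((QuotientGroup.mk : G → G ⧸ H) '' (K : Set G)) := by
      calc (⊤ : ENNReal) = ∑' _ : ℕ, μ {((1 : G) : G ⧸ H)} :=
            (ENNReal.tsum_const_eq_top_of_ne_zero hc).symm
        _ = ∑' n : ℕ, μ {((k n : G) : G ⧸ H)} := by simp_rw [htrans]
        _ = μ (⋃ n, ({((k n : G) : G ⧸ H)} : Set (G ⧸ H))) := hU.symm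
        _ ≤ _ := measure_mono hsub
    exact absurd (lt_of_le_of_lt this hfin) (by simp)
  refine ⟨?_, hzero⟩
  -- uncountability
  intro hcount
  apply hμK
  have hcover : (QuotientGroup.mk : G → G ⧸ H) '' (K : Set G)
      ⊆ ⋃ c : ↥K ⧸ (H ⊓ K).subgroupOf K, ({((c.out : G) : G ⧸ H)} : Set (G ⧸ H)) := by
    rintro x ⟨g, hg, rfl⟩
    refine Set.mem_iUnion.mpr ⟨((⟨g, hg⟩ : K) : ↥K ⧸ (H ⊓ K).subgroupOf K), ?_⟩
    simp only [Set.mem_singleton_iff]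
    set c := ((⟨g, hg⟩ : K) : ↥K ⧸ (H ⊓ K).subgroupOf K)
    have hc : (c.out : ↥K ⧸ (H ⊓ K).subgroupOf K) = c := QuotientGroup.out_eq' c
    have := QuotientGroup.eq.mp hc
    simp only [Subgroup.mem_subgroupOf, Subgroup.mem_inf] at this
    have h1 : ((c.out : K) : G)⁻¹ * g ∈ H := by simpa using this.1
    exact QuotientGroup.eq.mpr (by simpa [mul_inv_rev] using H.inv_mem h1)
  refine le_antisymm ?_ (zero_le)
  calc μ ((QuotientGroup.mk : G → G ⧸ H) '' (K : Set G))
      ≤ μ (⋃ c : ↥K ⧸ (H ⊓ K).subgroupOf K, ({((c.out : G) : G ⧸ H)} : Set (G ⧸ H))) :=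
        measure_mono hcover
    _ = 0 := measure_iUnion_null fun c => (htrans _).trans hzero
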